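/- Let q ≥ 0 be a real number, t a real number with |t| < 1, and 0 < u < 1/√((q+t)(1−t)). Then for every integer k ≥ 0, the G(t)-transform of the function τ ↦ e^{−(q+1)τ} ((q+t)(1−t))^{−k/2} I_k(2√((q+t)(1−t)) τ) equals u^{k−1}, where the G(t)-transform of an integrable function f is defined by G(t)f(u) = (u^{−2} − (q+t)(1−t)) ∫_0^∞ e^{−((q+t)(1−t)u + 1/u − (q+1))τ} f(τ) dτ. -/

import Mathlib

open Real MeasureTheory

lemma cb_le_four_pow (n : ℕ) : (Nat.centralBinom n : ℝ) ≤ 4 ^ n := by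
  have h : Nat.centralBinom n ≤ 4 ^ n := by
    calc Nat.centralBinom n = (2*n).choose n := rfl
      _ ≤ 2 ^ (2*n) := by
          have : (2*n).choose n ≤ (Finset.range (2*n+1)).sum ((2*n).choose ·) :=
            Finset.single_le_sum (f := ((2*n).choose ·)) (fun i _ => Nat.zero_le _)
              (by simp [Finset.mem_range]; omega)
          simpa [Nat.sum_range_choose] using this
      _ = 4 ^ n := by rw [pow_mul]; norm_num
  exact_mod_cast h

lemma summable_cb {y : ℝ} (hy : |y| < 1/4) :
    Summable (fun n => (Nat.centralBinom n : ℝ) * y ^ n) := by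
  apply Summable.of_norm
  have h : ∀ n : ℕ, ‖(Nat.centralBinom n : ℝ) * y ^ n‖ ≤ (4 * |y|) ^ n := by
    intro n
    rw [norm_mul, norm_pow, mul_pow]
    gcongr
    · simpa using cb_le_four_pow n
    · rw [Real.norm_eq_abs]
  exact Summable.of_nonneg_of_le (fun n => norm_nonneg _) h
    (summable_geometric_of_lt_one (by positivity) (by linarith))

lemma hasSum_cb {y : ℝ} (hy0 : 0 ≤ y) (hy : y < 1/4) :
    HasSum (fun n => (Nat.centralBinom n : ℝ) * y ^ n) (1 / Real.sqrt (1 - 4*y)) := by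
  set r : ℝ := (y + 1/4)/2 with hr
  have hr0 : 0 < r := by positivity
  have hrlt : r < 1/4 := by rw [hr]; linarith
  have hyr : y < r := by rw [hr]; linarith
  set t : Set ℝ := Set.Ioo (-r) r with ht
  have hyt : y ∈ t := ⟨by linarith, hyr⟩
  have h0t : (0:ℝ) ∈ t := ⟨by linarith, hr0⟩
  set f : ℝ → ℝ := fun z => ∑' n, (Nat.centralBinom n : ℝ) * z ^ n with hf
  set g' : ℕ → ℝ → ℝ := fun n z => (Nat.centralBinom n : ℝ) * (n * z ^ (n-1)) with hg'
  set u : ℕ → ℝ := fun n => 4 * ((n:ℝ) * (4*r) ^ (n-1)) with hu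
  have hder_g : ∀ n z, HasDerivAt (fun z => (Nat.centralBinom n : ℝ) * z ^ n) (g' n z) z :=
    fun n z => (hasDerivAt_pow n z).const_mul _
  have hsummable_u : Summable u := by
    apply Summable.mul_left
    have h4r : ‖4*r‖ < 1 := by rw [Real.norm_eq_abs, abs_of_pos (by positivity)]; linarith
    have h1 : Summable (fun n : ℕ => ((n+1):ℝ) * (4*r)^n) := by
      have := summable_pow_mul_geometric_of_norm_lt_one 1 h4r (R := ℝ)
      have h2 := summable_geometric_of_lt_one (by positivity : (0:ℝ) ≤ 4*r) (by linarith)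
      simpa [add_mul, one_mul, pow_one] using (this.add h2)
    have he : (fun n : ℕ => ((n+1:ℕ):ℝ) * (4*r)^((n+1)-1)) = fun n : ℕ => ((n+1):ℝ) * (4*r)^n := by
      funext n; push_cast; ring_nf
    exact (summable_nat_add_iff (f := fun n : ℕ => (n:ℝ) * (4*r)^(n-1)) 1).mp (by rw [he]; exact h1)
  have habs : ∀ z ∈ t, |z| < r := fun z hz => abs_lt.2 ⟨hz.1, hz.2⟩
  have hbound : ∀ (n : ℕ), ∀ z ∈ t, ‖g' n z‖ ≤ u n := by
    intro n z hz
    have hzr := (habs z hz).le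
    have : ‖g' n z‖ = (Nat.centralBinom n : ℝ) * ((n:ℝ) * |z| ^ (n-1)) := by
      simp [hg', abs_mul, abs_pow, Nat.abs_cast]
    rw [this, hu]
    calc (Nat.centralBinom n : ℝ) * ((n:ℝ) * |z| ^ (n-1))
        ≤ 4^n * ((n:ℝ) * r ^ (n-1)) := by
          apply mul_le_mul (cb_le_four_pow n) ?_ (by positivity) (by positivity)
          exact mul_le_mul_of_nonneg_left (pow_le_pow_left₀ (abs_nonneg z) hzr _) (by positivity)
      _ = 4 * ((n:ℝ) * (4*r) ^ (n-1)) := by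
          rcases n with _ | m
          · simp
          · simp only [Nat.add_sub_cancel]
            rw [mul_pow, pow_succ]
            ring
  have hsum0 : Summable fun n => (Nat.centralBinom n : ℝ) * (0:ℝ) ^ n :=
    summable_cb (by norm_num)
  have hder : ∀ z ∈ t, HasDerivAt f (∑' n, g' n z) z := by
    intro z hz
    exact hasDerivAt_tsum_of_isPreconnected hsummable_u isOpen_Ioo
      (convex_Ioo _ _).isPreconnected (fun n w _ => hder_g n w)
      (fun n w hw => hbound n w hw) h0t hsum0 hz
  have hsummable_g' : ∀ z ∈ t, Summable (fun n => g' n z) := by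
    intro z hz
    exact Summable.of_norm (hsummable_u.of_nonneg_of_le (fun n => norm_nonneg _)
      (fun n => hbound n z hz))
  have hkey : ∀ z ∈ t, (1 - 4*z) * (∑' n, g' n z) = 2 * f z := by
    intro z hz
    set S : ℝ := ∑' n, g' n z with hS
    have hzlt : |z| < 1/4 := lt_trans (habs z hz) hrlt
    have h1 : HasSum (fun n => g' n z) S := (hsummable_g' z hz).hasSum
    have h2 : HasSum (fun n => g' (n+1) z) S := by
      refine (hasSum_nat_add_iff (f := fun n => g' n z) 1).mpr ?_
      simpa [hg'] using h1
    have e2 : (fun n => g' (n+1) z)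
        = fun n : ℕ => (((n:ℝ)+1) * (Nat.centralBinom (n+1) : ℝ)) * z^n := by
      funext n
      simp only [hg', Nat.add_sub_cancel]
      push_cast; ring
    rw [e2] at h2
    have h4 : HasSum (fun n => (4*z) * g' n z) ((4*z) * S) := h1.mul_left _
    have e4 : (fun n => (4*z) * g' n z)
        = fun n : ℕ => (4*(n:ℝ)*(Nat.centralBinom n : ℝ)) * z^n := by
      funext n
      rcases n with _ | m
      · simp [hg']
      · simp only [hg', Nat.add_sub_cancel]
        push_cast
        rw [pow_succ]
        ring
    rw [e4] at h4
    have h5 := h2.sub h4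
    have e5 : (fun n : ℕ => (((n:ℝ)+1) * (Nat.centralBinom (n+1) : ℝ)) * z^n
        - (4*(n:ℝ)*(Nat.centralBinom n : ℝ)) * z^n)
        = fun n : ℕ => 2 * ((Nat.centralBinom n : ℝ) * z^n) := by
      funext n
      have hcb : ((n:ℝ)+1) * (Nat.centralBinom (n+1) : ℝ)
          = 2*(2*(n:ℝ)+1) * (Nat.centralBinom n : ℝ) := by
        have h2 : (((n+1) * Nat.centralBinom (n+1) : ℕ) : ℝ)
            = ((2 * (2*n+1) * Nat.centralBinom n : ℕ) : ℝ) := by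
          rw [Nat.succ_mul_centralBinom_succ]
        push_cast at h2
        linarith
      rw [hcb]; ring
    rw [e5] at h5
    have h6 : HasSum (fun n => 2 * ((Nat.centralBinom n : ℝ) * z^n)) (2 * f z) :=
      (summable_cb hzlt).hasSum.mul_left 2
    have huniq := h5.unique h6
    linear_combination huniq
  set F : ℝ → ℝ := fun z => f z * f z * (1 - 4*z) with hF
  have hFder : ∀ z ∈ t, HasDerivAt F 0 z := by
    intro z hz
    have hd := hder z hz
    have hlin : HasDerivAt (fun z : ℝ => 1 - 4*z) (-4) z := by
      simpa using ((hasDerivAt_id z).const_mul (4:ℝ)).const_sub 1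
    have h := (hd.mul hd).mul hlin
    have hval : ((∑' n, g' n z) * f z + f z * (∑' n, g' n z)) * (1 - 4*z)
        + f z * f z * (-4) = 0 := by
      have hk := hkey z hz
      linear_combination (2 * f z) * hk
    have h2 : HasDerivAt (fun w => f w * f w * (1 - 4*w)) 0 z := hval ▸ h
    exact h2
  have hconst : F y = F 0 := by
    have hsub : Set.Icc (0:ℝ) y ⊆ t := fun w hw => ⟨by linarith [hw.1], lt_of_le_of_lt hw.2 hyr⟩
    have hcont : ContinuousOn F (Set.Icc 0 y) := fun w hw =>
      ((hFder w (hsub hw)).continuousAt).continuousWithinAt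
    have hd : ∀ w ∈ Set.Ico (0:ℝ) y, HasDerivWithinAt F 0 (Set.Ici w) w := fun w hw =>
      (hFder w (hsub ⟨hw.1, hw.2.le⟩)).hasDerivWithinAt
    exact constant_of_has_deriv_right_zero hcont hd y ⟨hy0, le_refl y⟩
  have hf0 : f 0 = 1 := by
    show (∑' n, (Nat.centralBinom n : ℝ) * (0:ℝ) ^ n) = 1
    rw [tsum_eq_single 0 (fun n hn => by simp [zero_pow hn])]
    simp [Nat.centralBinom_zero]
  have hF0 : F 0 = 1 := by
    show f 0 * f 0 * (1 - 4*(0:ℝ)) = 1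
    rw [hf0]; norm_num
  have hFy : f y * f y * (1 - 4*y) = 1 := hconst.trans hF0
  have hfy1 : (1:ℝ) ≤ f y := by
    have := Summable.le_tsum (summable_cb (by rw [abs_of_nonneg hy0]; exact hy)) 0
      (fun n _ => by positivity)
    simpa [Nat.centralBinom_zero] using this
  have h14 : (0:ℝ) < 1 - 4*y := by linarith
  have hsqrtpos : 0 < Real.sqrt (1-4*y) := Real.sqrt_pos.2 h14
  have hsq : (Real.sqrt (1-4*y) * f y) * (Real.sqrt (1-4*y) * f y) = 1 := by
    have hss : Real.sqrt (1-4*y) * Real.sqrt (1-4*y) = 1 - 4*y :=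
      Real.mul_self_sqrt h14.le
    calc (Real.sqrt (1-4*y) * f y) * (Real.sqrt (1-4*y) * f y)
        = f y * f y * (Real.sqrt (1-4*y) * Real.sqrt (1-4*y)) := by ring
      _ = 1 := by rw [hss]; exact hFy
  have hpos : 0 < Real.sqrt (1-4*y) * f y := by
    apply mul_pos hsqrtpos; linarith
  have h1 : Real.sqrt (1-4*y) * f y = 1 := by nlinarith [hsq, hpos]
  have hfinal : f y = 1 / Real.sqrt (1-4*y) := by
    rw [eq_div_iff (ne_of_gt hsqrtpos)]
    linear_combination h1
  rw [← hfinal]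
  exact (summable_cb (by rw [abs_of_nonneg hy0]; exact hy)).hasSum

lemma choose_le_two_pow' (n i : ℕ) : (n.choose i : ℝ) ≤ 2 ^ n := by
  have h : n.choose i ≤ 2 ^ n := by
    rcases le_or_gt i n with h | h
    · have : n.choose i ≤ (Finset.range (n+1)).sum (n.choose ·) :=
        Finset.single_le_sum (f := (n.choose ·)) (fun j _ => Nat.zero_le _)
          (Finset.mem_range.2 (by omega))
      simpa [Nat.sum_range_choose] using this
    · rw [Nat.choose_eq_zero_of_lt h]; positivity
  exact_mod_cast h

lemma summable_ballot {y : ℝ} (hy0 : 0 ≤ y) (hy : y < 1/4) (k : ℕ) :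
    Summable (fun m : ℕ => ((k + 2*m).choose m : ℝ) * y ^ m) := by
  refine Summable.of_nonneg_of_le (f := fun m => 2^k * (4*y)^m)
    (fun m => mul_nonneg (Nat.cast_nonneg _) (pow_nonneg hy0 m)) (fun m => ?_) ?_
  · 
    have h1 : ((k + 2*m).choose m : ℝ) ≤ 2^k * 4^m := by
      calc ((k + 2*m).choose m : ℝ) ≤ 2 ^ (k + 2*m) := choose_le_two_pow' _ _
        _ = 2^k * 4^m := by rw [pow_add, pow_mul]; norm_num
    calc ((k + 2*m).choose m : ℝ) * y ^ m ≤ (2^k * 4^m) * y^m := by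
          apply mul_le_mul_of_nonneg_right h1 (by positivity)
      _ = 2^k * (4*y)^m := by rw [mul_pow]; ring
  exact Summable.mul_left _ (summable_geometric_of_lt_one (by positivity) (by linarith))

lemma lemB {x : ℝ} (hx0 : 0 < x) (hx1 : x < 1) (k : ℕ) :
    HasSum (fun m : ℕ => (((k + 2*m).choose m : ℕ) : ℝ) * (x/(1+x)^2) ^ m)
      ((1+x)^(k+1)/(1-x)) := by
  set y : ℝ := x/(1+x)^2 with hy
  have h1x : (0:ℝ) < 1 + x := by linarith
  have hy0 : 0 < y := by positivity
  have hy14 : y < 1/4 := by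
    rw [hy, div_lt_div_iff₀ (by positivity) (by norm_num)]
    nlinarith [sq_nonneg (1-x)]
  have h4y : 1 - 4*y = ((1-x)/(1+x))^2 := by
    rw [hy]; field_simp; ring
  have hsqrt : Real.sqrt (1 - 4*y) = (1-x)/(1+x) := by
    rw [h4y, Real.sqrt_sq (div_nonneg (by linarith) (by linarith))]
  have hv : (1:ℝ) / Real.sqrt (1-4*y) = (1+x)/(1-x) := by
    rw [hsqrt]; rw [one_div_div]
  -- base case k = 0
  have base0 : HasSum (fun m : ℕ => (((0 + 2*m).choose m : ℕ) : ℝ) * y ^ m)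
      ((1+x)^(0+1)/(1-x)) := by
    have h := hasSum_cb hy0.le hy14
    rw [hv] at h
    have e : (fun n : ℕ => (Nat.centralBinom n : ℝ) * y ^ n)
        = fun m : ℕ => (((0 + 2*m).choose m : ℕ) : ℝ) * y ^ m := by
      funext n; rw [Nat.centralBinom]; norm_num
    rw [e] at h
    simpa using h
  -- base case k = 1
  have base1 : HasSum (fun m : ℕ => (((1 + 2*m).choose m : ℕ) : ℝ) * y ^ m)
      ((1+x)^(1+1)/(1-x)) := by
    have h := hasSum_cb hy0.le hy14
    rw [hv] at h
    have hshift : HasSum (fun n : ℕ => (Nat.centralBinom (n+1) : ℝ) * y ^ (n+1))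
        ((1+x)/(1-x) - 1) := by
      refine (hasSum_nat_add_iff
        (f := fun n : ℕ => (Nat.centralBinom n : ℝ) * y ^ n) 1).mpr ?_
      have : (1+x)/(1-x) - 1 + ∑ i ∈ Finset.range 1, (Nat.centralBinom i : ℝ) * y ^ i
          = (1+x)/(1-x) := by simp [Nat.centralBinom_zero]
      rw [this]
      exact h
    have h2 := hshift.mul_left (1/(2*y))
    have e : (fun n : ℕ => (1/(2*y)) * ((Nat.centralBinom (n+1) : ℝ) * y ^ (n+1)))
        = fun m : ℕ => (((1 + 2*m).choose m : ℕ) : ℝ) * y ^ m := by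
      funext n
      have hcb : (Nat.centralBinom (n+1) : ℝ) = 2 * ((1 + 2*n).choose n : ℕ) := by
        have hnat : Nat.centralBinom (n+1) = 2 * (1 + 2*n).choose n := by
          have e1 : Nat.centralBinom (n+1) = (2*n+1+1).choose (n+1) := by
            rw [Nat.centralBinom]; congr 1
          rw [e1, Nat.choose_succ_succ]
          
          have e2 : (2*n+1).choose (n+1) = (2*n+1).choose n := by
            have := Nat.choose_symm (show n ≤ 2*n+1 by omega)
            simpa [show 2*n+1-n = n+1 by omega] using this
          rw [e2]
          have e3 : (2*n+1).choose n = (1+2*n).choose n := by congr 1; ring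
          omega
        exact_mod_cast hnat
      rw [hcb, pow_succ]
      field_simp
    rw [e] at h2
    have hval : (1/(2*y)) * ((1+x)/(1-x) - 1) = (1+x)^(1+1)/(1-x) := by
      rw [hy]
      have h1 : (1:ℝ) - x ≠ 0 := by linarith
      have h2 : (1:ℝ) + x ≠ 0 := by linarith
      field_simp
      ring
    rw [hval] at h2
    exact h2
  -- induction
  suffices h : ∀ k : ℕ,
      (HasSum (fun m : ℕ => (((k + 2*m).choose m : ℕ) : ℝ) * y ^ m) ((1+x)^(k+1)/(1-x)) ∧
       HasSum (fun m : ℕ => (((k+1 + 2*m).choose m : ℕ) : ℝ) * y ^ m) ((1+x)^(k+2)/(1-x))) by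
    exact (h k).1
  intro k
  induction k with
  | zero => exact ⟨base0, base1⟩
  | succ k ih =>
    refine ⟨ih.2, ?_⟩
    -- prove for k+2
    have hsumm := summable_ballot hy0.le hy14 (k+2)
    set T : ℝ := ∑' m : ℕ, (((k+2 + 2*m).choose m : ℕ) : ℝ) * y ^ m with hT
    have hTsum : HasSum (fun m : ℕ => (((k+2 + 2*m).choose m : ℕ) : ℝ) * y ^ m) T :=
      hsumm.hasSum
    have hD : HasSum (fun m : ℕ => (((k+2 + 2*m).choose m : ℕ) : ℝ) * y ^ (m+1)) (y * T) := by
      have h := hTsum.mul_left y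
      have e : (fun m : ℕ => y * ((((k+2 + 2*m).choose m : ℕ) : ℝ) * y ^ m))
          = fun m : ℕ => (((k+2 + 2*m).choose m : ℕ) : ℝ) * y ^ (m+1) := by
        funext m; rw [pow_succ]; ring
      rw [e] at h
      exact h
    set E : ℕ → ℝ := fun m =>
      if m = 0 then 0 else (((k + 2*m).choose (m-1) : ℕ) : ℝ) * y ^ m with hEdef
    have hE : HasSum E (y * T) := by
      have e' : (fun n : ℕ => E (n+1))
          = fun m : ℕ => (((k+2 + 2*m).choose m : ℕ) : ℝ) * y ^ (m+1) := by
        funext n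
        rw [hEdef]
        simp only [Nat.succ_ne_zero, if_false, Nat.add_sub_cancel]
        rw [show k+2*(n+1) = k+2+2*n from by omega]
      have hD' : HasSum (fun n : ℕ => E (n+1)) (y * T) := by rw [e']; exact hD
      have := (hasSum_nat_add_iff (f := E) 1).mp hD'
      simpa [hEdef] using this
    have hnext : HasSum (fun m : ℕ => (((k+1 + 2*m).choose m : ℕ) : ℝ) * y ^ m)
        ((1+x)^(k+1)/(1-x) + y * T) := by
      have h := ih.1.add hE
      have e : (fun m : ℕ => (((k + 2*m).choose m : ℕ) : ℝ) * y ^ m + E m)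
          = fun m : ℕ => (((k+1 + 2*m).choose m : ℕ) : ℝ) * y ^ m := by
        funext m
        rcases m with _ | j
        · simp [hEdef]
        · rw [hEdef]
          simp only [Nat.succ_ne_zero, if_false, Nat.add_sub_cancel]
          have hnat : (k+1 + 2*(j+1)).choose (j+1)
              = (k + 2*(j+1)).choose (j+1) + (k + 2*(j+1)).choose j := by
            rw [show k+1+2*(j+1) = (k + 2*(j+1))+1 by omega, Nat.choose_succ_succ']
            omega
          rw [hnat]
          push_cast
          ring
      rw [e] at h
      exact h
    have hEq : (1+x)^(k+1)/(1-x) + y * T = (1+x)^(k+1+1)/(1-x) := hnext.unique ih.2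
    have h1x' : (1:ℝ) - x ≠ 0 := by linarith
    have h1x'' : (1:ℝ) + x ≠ 0 := by linarith
    have hyne : y ≠ 0 := ne_of_gt hy0
    have hTval : T = (1+x)^(k+1+2)/(1-x) := by
      have hyT : y * T = x * (1+x)^(k+1) / (1-x) := by
        have e2 : y*T = (1+x)^(k+1+1)/(1-x) - (1+x)^(k+1)/(1-x) := by linarith [hEq]
        rw [e2, pow_succ]
        field_simp
        ring
      have e3 : T = (x * (1+x)^(k+1) / (1-x)) / y := by
        rw [← hyT]
        field_simp
      rw [e3, hy]
      field_simp
      ring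
    have efin : (fun m : ℕ => (((k+2 + 2*m).choose m : ℕ) : ℝ) * y ^ m)
        = fun m : ℕ => (((k+1+1 + 2*m).choose m : ℕ) : ℝ) * y ^ m := by
      funext m
      congr 3
    rw [efin, hTval] at hTsum
    exact hTsum

lemma keyIdentity {x : ℝ} (hx0 : 0 < x) (hx1 : x < 1) (k : ℕ) :
    HasSum (fun m : ℕ => (((k + 2*m).choose m : ℕ) : ℝ) * x^m / (1+x)^(k+2*m+1))
      (1/(1-x)) := by
  have h1x : (0:ℝ) < 1 + x := by linarith
  have h := (lemB hx0 hx1 k).div_const ((1+x)^(k+1))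
  have e : (fun m : ℕ => (((k + 2*m).choose m : ℕ) : ℝ) * (x/(1+x)^2) ^ m / (1+x)^(k+1))
      = fun m : ℕ => (((k + 2*m).choose m : ℕ) : ℝ) * x^m / (1+x)^(k+2*m+1) := by
    funext m
    rw [div_pow, ← pow_mul]
    rw [mul_div_assoc, div_div, ← pow_add,
      show 2*m + (k+1) = k+2*m+1 from by omega, mul_div_assoc]
  rw [e] at h
  have hval : (1+x)^(k+1)/(1-x) / (1+x)^(k+1) = 1/(1-x) := by
    rw [div_div, mul_comm, ← div_div]
    rw [div_self (by positivity)]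
  rw [hval] at h
  exact h

/-- The modified Bessel function of the first kind of nonnegative integer order `k`. -/
noncomputable def besselI (k : ℕ) (τ : ℝ) : ℝ :=
  ∑' m : ℕ, (τ / 2) ^ (k + 2 * m) / ((Nat.factorial m : ℝ) * (Nat.factorial (m + k) : ℝ))

/-- The `G(t)`-transform of a function `f : (0,∞) → ℝ`:
`G(t)f(u) = (u^{−2} − (q+t)(1−t)) ∫_0^∞ e^{−((q+t)(1−t)u + 1/u − (q+1))τ} f(τ) dτ`. -/
noncomputable def Gtransform (q t : ℝ) (f : ℝ → ℝ) (u : ℝ) : ℝ :=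
  (u ^ (-2 : ℝ) - (q + t) * (1 - t)) *
    ∫ τ in Set.Ioi (0 : ℝ),
      Real.exp (-((q + t) * (1 - t) * u + 1 / u - (q + 1)) * τ) * f τ

lemma integrableOn_exp_pow {s : ℝ} (hs : 0 < s) (n : ℕ) :
    IntegrableOn (fun τ : ℝ => Real.exp (-s*τ) * τ^n) (Set.Ioi (0:ℝ)) := by
  have h := integrableOn_rpow_mul_exp_neg_mul_rpow (s := (n:ℝ)) (p := 1)
    (lt_of_lt_of_le neg_one_lt_zero (Nat.cast_nonneg n)) one_pos hs
  have e : (fun x : ℝ => x ^ (n:ℝ) * Real.exp (-s * x ^ (1:ℝ)))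
      = fun τ : ℝ => Real.exp (-s*τ) * τ^n := by
    funext τ
    rw [Real.rpow_natCast, Real.rpow_one, mul_comm]
  rwa [e] at h

lemma integral_exp_pow {s : ℝ} (hs : 0 < s) (n : ℕ) :
    ∫ τ in Set.Ioi (0:ℝ), Real.exp (-s*τ) * τ^n = (n.factorial : ℝ) / s^(n+1) := by
  have h := integral_rpow_mul_exp_neg_mul_Ioi (a := (n:ℝ)+1) (by positivity) hs
  rw [show ((n:ℝ)+1)-1 = (n:ℝ) from by ring] at h
  rw [show ((n:ℝ)+1) = ((n+1:ℕ):ℝ) from by push_cast; ring] at h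
  rw [Real.rpow_natCast] at h
  rw [show ((n+1:ℕ):ℝ) = (n:ℝ)+1 from by push_cast; ring] at h
  rw [Real.Gamma_nat_eq_factorial] at h
  have e : (fun τ : ℝ => τ ^ (n:ℝ) * Real.exp (-(s*τ)))
      = fun τ : ℝ => Real.exp (-s*τ) * τ^n := by
    funext τ
    rw [Real.rpow_natCast, neg_mul, mul_comm]
  rw [e] at h
  rw [h, one_div, inv_pow]
  ring


/-- For `q ≥ 0`, `|t| < 1`, `0 < u < 1/√((q+t)(1−t))` and every `k ≥ 0`, the
`G(t)`-transform of `τ ↦ e^{−(q+1)τ} ((q+t)(1−t))^{−k/2} I_k(2√((q+t)(1−t)) τ)`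
equals `u^{k−1}`. -/
theorem Gtransform_besselI (q t u : ℝ) (k : ℕ)
    (hq : 0 ≤ q) (ht : |t| < 1)
    (hu0 : 0 < u) (hu1 : u < 1 / Real.sqrt ((q + t) * (1 - t))) :
    Gtransform q t
      (fun τ => Real.exp (-(q + 1) * τ) * ((q + t) * (1 - t)) ^ (-(k : ℝ) / 2) *
        besselI k (2 * Real.sqrt ((q + t) * (1 - t)) * τ)) u
      = u ^ ((k : ℝ) - 1) := by
  set a : ℝ := (q+t)*(1-t) with ha
  have ha0 : 0 < a := by
    rcases le_or_gt a 0 with h | h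
    · exfalso
      rw [Real.sqrt_eq_zero'.mpr h] at hu1
      simp at hu1; linarith
    · exact h
  have hu : u ≠ 0 := ne_of_gt hu0
  have hsa : 0 < Real.sqrt a := Real.sqrt_pos.2 ha0
  have hux : u * Real.sqrt a < 1 := by
    rw [lt_div_iff₀ hsa] at hu1; exact hu1
  set x : ℝ := a*u^2 with hx
  have hx0 : 0 < x := by positivity
  have hx1 : x < 1 := by
    have h1 : x = (u*Real.sqrt a)^2 := by
      rw [hx, mul_pow, Real.sq_sqrt ha0.le]; ring
    nlinarith [mul_pos hu0 hsa]
  have h1mx : (0:ℝ) < 1 - x := by linarith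
  have h1px : (0:ℝ) < 1 + x := by linarith
  set s : ℝ := a*u + 1/u with hsdef
  have hs0 : 0 < s := by positivity
  have hsu : s = (1+x)/u := by rw [hsdef, hx]; field_simp; ring
  set c : ℝ := a ^ (-(k:ℝ)/2) with hc
  set g : ℕ → ℝ → ℝ := fun m τ => Real.exp (-s*τ) *
    ((Real.sqrt a * τ)^(k+2*m) / ((Nat.factorial m : ℝ) * (Nat.factorial (m+k) : ℝ)))
    with hg
  -- Step A : rewrite the integrand
  have hA : (fun τ => Real.exp (-(a*u + 1/u - (q+1)) * τ) *
        (Real.exp (-(q+1)*τ) * c * besselI k (2 * Real.sqrt a * τ)))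
      = fun τ => c * ∑' m, g m τ := by
    funext τ
    have hexp : Real.exp (-(a*u + 1/u - (q+1))*τ) * Real.exp (-(q+1)*τ)
        = Real.exp (-s*τ) := by
      rw [← Real.exp_add]; congr 1; rw [hsdef]; ring
    have hbes : besselI k (2 * Real.sqrt a * τ)
        = ∑' m, (Real.sqrt a * τ)^(k+2*m) / ((Nat.factorial m : ℝ) * (Nat.factorial (m+k) : ℝ)) := by
      rw [besselI]
      apply tsum_congr
      intro m
      congr 2
      ring
    calc Real.exp (-(a*u + 1/u - (q+1)) * τ) *
          (Real.exp (-(q+1)*τ) * c * besselI k (2 * Real.sqrt a * τ))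
        = c * ((Real.exp (-(a*u + 1/u - (q+1))*τ) * Real.exp (-(q+1)*τ)) *
            besselI k (2 * Real.sqrt a * τ)) := by ring
      _ = c * (Real.exp (-s*τ) * ∑' m, (Real.sqrt a * τ)^(k+2*m)
            / ((Nat.factorial m : ℝ) * (Nat.factorial (m+k) : ℝ))) := by rw [hexp, hbes]
      _ = c * ∑' m, g m τ := by rw [← tsum_mul_left]
  -- integrability and values of term integrals
  have hgre : ∀ m : ℕ, g m = fun τ : ℝ =>
      ((Real.sqrt a)^(k+2*m) / ((Nat.factorial m : ℝ) * (Nat.factorial (m+k) : ℝ)))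
        * (Real.exp (-s*τ) * τ^(k+2*m)) := by
    intro m
    funext τ
    simp only [hg]
    rw [mul_pow]
    ring
  have hInt : ∀ m : ℕ, Integrable (g m) (volume.restrict (Set.Ioi (0:ℝ))) := by
    intro m
    rw [hgre m]
    exact (integrableOn_exp_pow hs0 (k+2*m)).const_mul _
  have hfact : ∀ m : ℕ, ((k+2*m).factorial : ℝ)
      / ((Nat.factorial m : ℝ) * (Nat.factorial (m+k) : ℝ)) = (((k+2*m).choose m : ℕ) : ℝ) := by
    intro m
    have h := Nat.choose_mul_factorial_mul_factorial (show m ≤ k+2*m by omega)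
    rw [show k+2*m-m = m+k from by omega] at h
    rw [div_eq_iff (by positivity)]
    exact_mod_cast (by rw [← h]; ring :
      ((k + 2*m).factorial = (k+2*m).choose m * (Nat.factorial m * Nat.factorial (m+k))))
  have hval : ∀ m : ℕ, ∫ τ in Set.Ioi (0:ℝ), g m τ
      = (((k+2*m).choose m : ℕ) : ℝ) * (Real.sqrt a)^(k+2*m) / s^(k+2*m+1) := by
    intro m
    rw [hgre m, integral_const_mul, integral_exp_pow hs0]
    have e : (Real.sqrt a)^(k+2*m) / ((Nat.factorial m : ℝ) * (Nat.factorial (m+k) : ℝ))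
        * (((k+2*m).factorial : ℝ) / s^(k+2*m+1))
        = (((k+2*m).factorial : ℝ) / ((Nat.factorial m : ℝ) * (Nat.factorial (m+k) : ℝ)))
        * ((Real.sqrt a)^(k+2*m) / s^(k+2*m+1)) := by ring
    rw [e, hfact m, mul_div_assoc]
  have hterm : ∀ m : ℕ,
      (((k+2*m).choose m : ℕ) : ℝ) * (Real.sqrt a)^(k+2*m) / s^(k+2*m+1)
      = ((Real.sqrt a)^k * u^(k+1))
        * ((((k+2*m).choose m : ℕ) : ℝ) * x^m / (1+x)^(k+2*m+1)) := by
    intro m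
    rw [hsu, div_pow, pow_add (Real.sqrt a), pow_mul, Real.sq_sqrt ha0.le, hx]
    rw [mul_pow (a) (u^2), ← pow_mul u 2 m]
    have h1pxne : ((1:ℝ)+ a*u^2) ≠ 0 := by
      have : (0:ℝ) < 1 + a*u^2 := by positivity
      exact ne_of_gt this
    field_simp
    ring
  have hVsum : HasSum
      (fun m : ℕ => (((k+2*m).choose m : ℕ) : ℝ) * (Real.sqrt a)^(k+2*m) / s^(k+2*m+1))
      ((Real.sqrt a)^k * u^(k+1) * (1/(1-x))) := by
    have h := (keyIdentity hx0 hx1 k).mul_left ((Real.sqrt a)^k * u^(k+1))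
    have e : (fun m : ℕ => ((Real.sqrt a)^k * u^(k+1))
          * ((((k+2*m).choose m : ℕ) : ℝ) * x^m / (1+x)^(k+2*m+1)))
        = fun m : ℕ => (((k+2*m).choose m : ℕ) : ℝ) * (Real.sqrt a)^(k+2*m) / s^(k+2*m+1) :=
      funext fun m => (hterm m).symm
    rw [e] at h
    exact h
  have hswap : ∑' m : ℕ, (∫ τ in Set.Ioi (0:ℝ), g m τ) = ∫ τ in Set.Ioi (0:ℝ), ∑' m, g m τ := by
    apply integral_tsum_of_summable_integral_norm hInt
    have e : (fun m : ℕ => ∫ τ in Set.Ioi (0:ℝ), ‖g m τ‖)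
        = fun m : ℕ => ∫ τ in Set.Ioi (0:ℝ), g m τ := by
      funext m
      apply setIntegral_congr_fun measurableSet_Ioi
      intro τ hτ
      simp only [hg]
      rw [Real.norm_eq_abs, abs_of_nonneg]
      exact mul_nonneg (Real.exp_nonneg _) (div_nonneg
        (pow_nonneg (mul_nonneg (Real.sqrt_nonneg a) (le_of_lt hτ)) _) (by positivity))
    rw [e, funext hval]
    exact hVsum.summable
  have htsum : ∑' m : ℕ, (∫ τ in Set.Ioi (0:ℝ), g m τ)
      = (Real.sqrt a)^k * u^(k+1) * (1/(1-x)) := by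
    rw [funext hval]
    exact hVsum.tsum_eq
  have hca : c * (Real.sqrt a)^k = 1 := by
    have h1 : (Real.sqrt a)^k = a ^ ((k:ℝ)/2) := by
      rw [Real.sqrt_eq_rpow, ← Real.rpow_natCast (a ^ ((1:ℝ)/2)) k, ← Real.rpow_mul ha0.le]
      congr 1
      ring
    rw [hc, h1, ← Real.rpow_add ha0]
    rw [show -(k:ℝ)/2 + (k:ℝ)/2 = 0 from by ring, Real.rpow_zero]
  have hu2 : u ^ (-2:ℝ) = (u^2)⁻¹ := by
    rw [show (-2:ℝ) = -(((2:ℕ)):ℝ) by norm_num, Real.rpow_neg hu0.le, Real.rpow_natCast]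
  have hrhs : u ^ ((k:ℝ)-1) = u^k / u := by
    rw [Real.rpow_sub hu0, Real.rpow_one, Real.rpow_natCast]
  -- assemble
  simp only [Gtransform]
  rw [hA, integral_const_mul, ← hswap, htsum, hu2, hrhs]
  rw [show ((u^2)⁻¹ - a) * (c * ((Real.sqrt a)^k * u^(k+1) * (1/(1-x))))
      = (c * (Real.sqrt a)^k) * (((u^2)⁻¹ - a) * (u^(k+1) * (1/(1-x)))) from by ring,
    hca, one_mul, hx]
  have hax : (1:ℝ) - a*u^2 ≠ 0 := by rw [← hx]; exact ne_of_gt h1mx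
  field_simp
  rw [mul_comm a (u^2)] at hax
  field_simp
  ring
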